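/- Let Ω be a homotopy functor from Zᵗ(Top) to a preadditive category D which preserves the involution, meaning Ω(f,-ζ) = -Ω(f,ζ) for every morphism (f,ζ) of Zᵗ(Top); in particular Ω(1_X, -1_{Λ_X}) = -id_{Ω(X,Λ_X)}. Let (f,ζ) : (X,Λ_X) → (Y,Λ_Y) be a morphism with X path-connected, and suppose F : X×[0,1] → Y is continuous with F∘ι₀ = F∘ι₁ = f, and there is x ∈ X such that the loop L : t ↦ F(x,t) satisfies Λ_Y(L) = -1. Then Ω(f,ζ) = -Ω(f,ζ), i.e. 2·Ω(f,ζ) = 0 in the abelian group of morphisms Hom(Ω(X,Λ_X), Ω(Y,Λ_Y)). -/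

import Mathlib

open unitInterval CategoryTheory

structure ZtSystem (X : Type*) [TopologicalSpace X] where
  val : ∀ {x y : X}, Path x y → ℤˣ
  homotopic_eq : ∀ {x y : X} {γ γ' : Path x y}, Path.Homotopic γ γ' → val γ = val γ'
  refl_eq : ∀ x : X, val (Path.refl x) = 1
  trans_eq : ∀ {x y z : X} (γ : Path x y) (δ : Path y z), val (γ.trans δ) = val γ * val δ

def ZtSystem.IsMorphism {X : Type*} [TopologicalSpace X] (Λ₀ Λ₁ : ZtSystem X)
    (ζ : X → ℤˣ) : Prop :=
  ∀ {x y : X} (γ : Path x y), Λ₀.val γ * Λ₁.val γ = ζ x * ζ y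

def ZtSystem.pullback {X Y : Type*} [TopologicalSpace X] [TopologicalSpace Y]
    (f : C(X, Y)) (Λ : ZtSystem Y) : ZtSystem X where
  val γ := Λ.val (γ.map f.continuous)
  homotopic_eq h := Λ.homotopic_eq (h.map f)
  refl_eq x := by
    show Λ.val ((Path.refl x).map f.continuous) = 1
    rw [show (Path.refl x).map f.continuous = Path.refl (f x) from Path.ext rfl]
    exact Λ.refl_eq _
  trans_eq γ δ := by
    show Λ.val ((γ.trans δ).map f.continuous) = _
    rw [Path.map_trans]
    exact Λ.trans_eq _ _

/-- An object of the category `Zᵗ(Top)`: a space together with a `ℤᵗ`-system. -/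
structure ZtTop where
  carrier : Type*
  [inst : TopologicalSpace carrier]
  lam : ZtSystem carrier

attribute [instance] ZtTop.inst

/-- A morphism in `Zᵗ(Top)`. -/
@[ext]
structure ZtHom (A B : ZtTop) where
  f : C(A.carrier, B.carrier)
  ζ : A.carrier → ℤˣ
  isMor : ZtSystem.IsMorphism A.lam (ZtSystem.pullback f B.lam) ζ

instance : Category ZtTop where
  Hom := ZtHom
  id A := { f := ContinuousMap.id _, ζ := fun _ => 1,
            isMor := by
              intro x y γ
              show A.lam.val γ * A.lam.val (γ.map continuous_id) = 1 * 1
              rw [Path.map_id, Int.units_mul_self, one_mul] }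
  comp {A B C} u v :=
    { f := v.f.comp u.f
      ζ := fun x => v.ζ (u.f x) * u.ζ x
      isMor := by
        intro x y γ
        have h1 : A.lam.val γ * B.lam.val (γ.map u.f.continuous) = u.ζ x * u.ζ y := u.isMor γ
        have h2 : B.lam.val (γ.map u.f.continuous) *
            C.lam.val ((γ.map u.f.continuous).map v.f.continuous) =
            v.ζ (u.f x) * v.ζ (u.f y) := v.isMor (γ.map u.f.continuous)
        show A.lam.val γ * C.lam.val (γ.map (v.f.comp u.f).continuous) = _
        have hmap : γ.map (v.f.comp u.f).continuous
            = (γ.map u.f.continuous).map v.f.continuous := by rw [Path.map_map]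
        rw [hmap]
        have hb : B.lam.val (γ.map u.f.continuous) * B.lam.val (γ.map u.f.continuous) = 1 :=
          Int.units_mul_self _
        calc A.lam.val γ * C.lam.val ((γ.map u.f.continuous).map v.f.continuous)
            = (A.lam.val γ * B.lam.val (γ.map u.f.continuous)) *
              (B.lam.val (γ.map u.f.continuous) *
                C.lam.val ((γ.map u.f.continuous).map v.f.continuous)) := by
              rw [mul_assoc (A.lam.val γ), ← mul_assoc (B.lam.val (γ.map u.f.continuous))
                (B.lam.val (γ.map u.f.continuous)), hb, one_mul]
          _ = (u.ζ x * u.ζ y) * (v.ζ (u.f x) * v.ζ (u.f y)) := by rw [h1, h2]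
          _ = v.ζ (u.f x) * u.ζ x * (v.ζ (u.f y) * u.ζ y) := by
              rw [mul_mul_mul_comm, mul_comm (u.ζ x), mul_comm (u.ζ y)] }
  id_comp u := ZtHom.ext (ContinuousMap.comp_id _) (funext fun x => mul_one _)
  comp_id u := ZtHom.ext (ContinuousMap.id_comp _) (funext fun x => one_mul _)
  assoc u v w := ZtHom.ext rfl (funext fun x => (mul_assoc _ _ _).symm)

/-- The `ℤᵗ`-system `Λ • θ_{[0,1]}` on `X × [0,1]`. -/
def ZtSystem.prodI {X : Type*} [TopologicalSpace X] (Λ : ZtSystem X) :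
    ZtSystem (X × I) :=
  ZtSystem.pullback ⟨Prod.fst, continuous_fst⟩ Λ

/-- The path `s ↦ (x, s·t)` in `X × [0,1]` from `(x,0)` to `(x,t)`. -/
def Path.seg {X : Type*} [TopologicalSpace X] (x : X) (t : I) :
    Path ((x, 0) : X × I) (x, t) where
  toFun s := (x, ⟨s.1 * t.1, unitInterval.mul_mem s.2 t.2⟩)
  continuous_toFun := by fun_prop
  source' := by
    refine Prod.ext rfl (Subtype.ext ?_)
    simp
  target' := by
    refine Prod.ext rfl (Subtype.ext ?_)
    simp

/-- The vertical path `t ↦ (x, t)` in `X × [0,1]` from `(x,0)` to `(x,1)`. -/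
def Path.vert {X : Type*} [TopologicalSpace X] (x : X) :
    Path ((x, 0) : X × I) (x, 1) where
  toFun t := (x, t)
  continuous_toFun := by fun_prop
  source' := rfl
  target' := rfl

/-- The object `(X × [0,1], Λ • θ_{[0,1]})` of `Zᵗ(Top)`. -/
def ZtTop.prodI (A : ZtTop) : ZtTop :=
  { carrier := A.carrier × I, lam := A.lam.prodI }

/-- The end inclusion `(ι_t, 1_Λ) : (X,Λ) → (X × [0,1], Λ • θ_{[0,1]})`. -/
def ZtTop.iota (A : ZtTop) (t : I) : A ⟶ A.prodI where
  f := ⟨fun x => (x, t), by fun_prop⟩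
  ζ := fun _ => 1
  isMor := by
    intro x y γ
    show A.lam.val γ * A.lam.prodI.val (γ.map _) = 1 * 1
    have : A.lam.prodI.val (γ.map (Continuous.prodMk (f := fun x : A.carrier => x)
        (g := fun _ : A.carrier => t) continuous_id continuous_const)) = A.lam.val γ := by
      show A.lam.val ((γ.map _).map _) = _
      rw [Path.map_map]
      congr 1
    rw [this, Int.units_mul_self, one_mul]

/-- The projection `(r, 1) : (X × [0,1], Λ • θ_{[0,1]}) → (X,Λ)`. -/
def ZtTop.proj (A : ZtTop) : A.prodI ⟶ A where
  f := ⟨Prod.fst, continuous_fst⟩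
  ζ := fun _ => 1
  isMor := by
    intro p q μ
    show A.lam.prodI.val μ * A.lam.val (μ.map continuous_fst) = 1 * 1
    show A.lam.val (μ.map continuous_fst) * A.lam.val (μ.map continuous_fst) = 1 * 1
    rw [Int.units_mul_self, one_mul]

/-- A homotopy functor on `Zᵗ(Top)`. -/
def IsHomotopyFunctor {D : Type*} [Category D] (Ω : Functor ZtTop D) : Prop :=
  ∀ A : ZtTop, Ω.map (A.proj) ≫ Ω.map (A.iota 0) = 𝟙 (Ω.obj A.prodI)

/-- The endomorphism `(1_X, -1_Λ)` of `(X, Λ)`. -/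
def ZtTop.negId (A : ZtTop) : A ⟶ A where
  f := ContinuousMap.id _
  ζ := fun _ => -1
  isMor := by
    intro x y γ
    show A.lam.val γ * A.lam.val (γ.map continuous_id) = (-1 : ℤˣ) * (-1 : ℤˣ)
    rw [Path.map_id, Int.units_mul_self, neg_mul_neg, one_mul]

/-- The involution on `Zᵗ(Top)`: `(f, ζ) ↦ (f, -ζ)`. -/
def ZtHom.neg {A B : ZtTop} (u : A ⟶ B) : A ⟶ B where
  f := u.f
  ζ := fun x => -(u.ζ x)
  isMor := by
    intro x y γ
    rw [neg_mul_neg]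
    exact u.isMor γ


section TaylorAux

open unitInterval

instance : ContractibleSpace I :=
  (convex_Icc (0:ℝ) 1).contractibleSpace (Set.nonempty_Icc.mpr zero_le_one)

lemma ZtSystem.val_congr {X : Type*} [TopologicalSpace X] (Λ : ZtSystem X)
    {a b a' b' : X} (ha : a = a') (hb : b = b') (γ : Path a b) (δ : Path a' b')
    (h : ∀ t, γ t = δ t) : Λ.val γ = Λ.val δ := by
  subst ha; subst hb
  congr 1
  exact Path.ext (funext h)

lemma ZtSystem.val_cast {X : Type*} [TopologicalSpace X] (Λ : ZtSystem X)
    {a b a' b' : X} (γ : Path a b) (ha : a' = a) (hb : b' = b) :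
    Λ.val (γ.cast ha hb) = Λ.val γ :=
  Λ.val_congr ha hb _ γ (fun _ => rfl)

lemma ZtSystem.val_symm {X : Type*} [TopologicalSpace X] (Λ : ZtSystem X)
    {a b : X} (γ : Path a b) : Λ.val γ.symm = Λ.val γ := by
  have h1 : Λ.val (γ.trans γ.symm) = 1 := by
    rw [Λ.homotopic_eq ⟨(Path.Homotopy.reflTransSymm γ).symm⟩, Λ.refl_eq]
  rw [Λ.trans_eq] at h1
  have h2 : Λ.val γ * Λ.val γ = 1 := Int.units_mul_self _
  exact mul_left_cancel (h1.trans h2.symm)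

lemma taylor_homotopic_of_proj_fst {X : Type*} [TopologicalSpace X] {p q : X × I}
    (α β : Path p q)
    (h : Path.Homotopic (α.map continuous_fst) (β.map continuous_fst)) :
    Path.Homotopic α β := by
  have h2 : Path.Homotopic (α.map continuous_snd) (β.map continuous_snd) :=
    SimplyConnectedSpace.paths_homotopic _ _
  have ha : α = (α.map continuous_fst).prod (α.map continuous_snd) := Path.ext rfl
  have hb : β = (β.map continuous_fst).prod (β.map continuous_snd) := Path.ext rfl
  rw [ha, hb]
  exact h.map2 Path.Homotopic.prodHomotopy h2

lemma taylor_units_alg (a u c d zx zy : ℤˣ) (E2 : a * (c * (u * d)) = zx * zy) :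
    a * u = zx * c * (zy * d) := by
  rcases Int.units_eq_one_or a with rfl | rfl <;>
  rcases Int.units_eq_one_or u with rfl | rfl <;>
  rcases Int.units_eq_one_or c with rfl | rfl <;>
  rcases Int.units_eq_one_or d with rfl | rfl <;>
  rcases Int.units_eq_one_or zx with rfl | rfl <;>
  rcases Int.units_eq_one_or zy with rfl | rfl <;>
  revert E2 <;> decide

lemma taylor_units_cancel (a b c : ℤˣ) (h : a * b = b * c) : c = a := by
  rcases Int.units_eq_one_or a with rfl | rfl <;>
  rcases Int.units_eq_one_or b with rfl | rfl <;>
  rcases Int.units_eq_one_or c with rfl | rfl <;>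
  revert h <;> decide

end TaylorAux

open CategoryTheory in
/-- If moreover `Ω` takes values in a preadditive category and preserves the
involution (`Ω(f,-ζ) = -Ω(f,ζ)`), then under the hypotheses of Taylor's lemma
with `Λ_Y(L) = -1` one gets `Ω(f,ζ) = -Ω(f,ζ)`, i.e. `2·Ω(f,ζ) = 0`. -/
theorem taylors_lemma_two_torsion {D : Type*} [Category D] [Preadditive D]
    (Ω : Functor ZtTop D) (hΩ : IsHomotopyFunctor Ω)
    (hinv : ∀ (A B : ZtTop) (u : A ⟶ B), Ω.map (ZtHom.neg u) = -Ω.map u)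
    (A B : ZtTop) [PathConnectedSpace A.carrier] (m : A ⟶ B)
    (F : C(A.carrier × I, B.carrier))
    (hF0 : ∀ x : A.carrier, F (x, 0) = ZtHom.f m x)
    (hF1 : ∀ x : A.carrier, F (x, 1) = ZtHom.f m x)
    (x : A.carrier)
    (hL : B.lam.val (((Path.vert x).map F.continuous).cast
      (hF0 x).symm (hF1 x).symm) = -1) :
    Ω.map m = -Ω.map m ∧ (2 : ℤ) • Ω.map m = 0 := by
  classical
  let ΛF : ZtSystem (A.carrier × I) := B.lam.pullback F
  have c0 : Continuous (fun a : A.carrier => ((a, (0:I)) : A.carrier × I)) := by fun_prop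
  have c1 : Continuous (fun a : A.carrier => ((a, (1:I)) : A.carrier × I)) := by fun_prop
  let ζF : A.carrier × I → ℤˣ := fun p => m.ζ p.1 * ΛF.val (Path.seg p.1 p.2)
  -- the value of ΛF on the vertical path is -1 everywhere
  have hx0 : ΛF.val (Path.vert x) = -1 := by
    have := B.lam.val_cast ((Path.vert x).map F.continuous) (hF0 x).symm (hF1 x).symm
    rw [hL] at this
    exact this.symm
  have hvert : ∀ y : A.carrier, ΛF.val (Path.vert y) = -1 := by
    intro y
    obtain ⟨pth⟩ : Joined x y := PathConnectedSpace.joined x y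
    have hhom : Path.Homotopic ((Path.vert x).trans (pth.map c1))
        ((pth.map c0).trans (Path.vert y)) := by
      apply taylor_homotopic_of_proj_fst
      have a1 : (Path.vert x).map continuous_fst = Path.refl x := Path.ext rfl
      have a2 : (pth.map c1).map continuous_fst = pth := Path.ext rfl
      have a3 : (pth.map c0).map continuous_fst = pth := Path.ext rfl
      have a4 : (Path.vert y).map continuous_fst = Path.refl y := Path.ext rfl
      rw [Path.map_trans, Path.map_trans, a1, a2, a3, a4]
      exact Path.Homotopic.trans ⟨Path.Homotopy.reflTrans pth⟩
        ⟨(Path.Homotopy.transRefl pth).symm⟩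
    have hval := ΛF.homotopic_eq hhom
    rw [ΛF.trans_eq, ΛF.trans_eq] at hval
    have hcommon : ΛF.val (pth.map c1) = ΛF.val (pth.map c0) := by
      have e1 : ΛF.val (pth.map c1) = B.lam.val (pth.map m.f.continuous) :=
        B.lam.val_congr (hF1 x) (hF1 y) _ _ (fun t => hF1 (pth t))
      have e0 : ΛF.val (pth.map c0) = B.lam.val (pth.map m.f.continuous) :=
        B.lam.val_congr (hF0 x) (hF0 y) _ _ (fun t => hF0 (pth t))
      rw [e1, e0]
    rw [hcommon] at hval
    rw [taylor_units_cancel _ _ _ hval, hx0]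
  -- ζF is a morphism from Λ•θ to the pullback of Λ_B along F
  have hGmor : ZtSystem.IsMorphism A.prodI.lam (ZtSystem.pullback F B.lam) ζF := by
    intro (p : A.carrier × I) (q : A.carrier × I) (μ : Path p q)
    have hhom : Path.Homotopic
        ((Path.seg p.1 p.2).trans (μ.trans (Path.seg q.1 q.2).symm))
        ((μ.map continuous_fst).map c0) := by
      apply taylor_homotopic_of_proj_fst
      have a1 : (Path.seg p.1 p.2).map continuous_fst = Path.refl p.1 := Path.ext rfl
      have a2 : ((Path.seg q.1 q.2).symm).map continuous_fst = Path.refl q.1 := Path.ext rfl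
      have a3 : ((μ.map continuous_fst).map c0).map continuous_fst
          = μ.map continuous_fst := Path.ext rfl
      rw [Path.map_trans, Path.map_trans, a1, a2, a3]
      refine Path.Homotopic.trans ?_ ⟨Path.Homotopy.reflTrans (μ.map continuous_fst)⟩
      exact Path.Homotopic.hcomp (Path.Homotopic.refl _)
        ⟨Path.Homotopy.transRefl (μ.map continuous_fst)⟩
    have hval := ΛF.homotopic_eq hhom
    rw [ΛF.trans_eq, ΛF.trans_eq, ΛF.val_symm] at hval
    have hright : ΛF.val ((μ.map continuous_fst).map c0)
        = B.lam.val ((μ.map continuous_fst).map m.f.continuous) :=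
      B.lam.val_congr (hF0 p.1) (hF0 q.1) _ _ (fun t => hF0 ((μ.map continuous_fst) t))
    rw [hright] at hval
    have hm := m.isMor (μ.map continuous_fst)
    show A.lam.val (μ.map continuous_fst) * B.lam.val (μ.map F.continuous)
        = ζF p * ζF q
    show A.lam.val (μ.map continuous_fst) * ΛF.val μ
        = (m.ζ p.1 * ΛF.val (Path.seg p.1 p.2)) * (m.ζ q.1 * ΛF.val (Path.seg q.1 q.2))
    have key : A.lam.val (μ.map continuous_fst)
        * (ΛF.val (Path.seg p.1 p.2) * (ΛF.val μ * ΛF.val (Path.seg q.1 q.2)))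
        = m.ζ p.1 * m.ζ q.1 := by
      rw [hval]; exact hm
    exact taylor_units_alg _ _ _ _ _ _ key
  let G : A.prodI ⟶ B := { f := F, ζ := ζF, isMor := hGmor }
  -- G ∘ ι₀ = m
  have h0 : A.iota 0 ≫ G = m := by
    refine ZtHom.ext (ContinuousMap.ext fun a => hF0 a) (funext fun a => ?_)
    show ζF (a, 0) * 1 = m.ζ a
    have hseg : Path.seg a (0:I) = Path.refl ((a, (0:I)) : A.carrier × I) :=
      Path.ext (funext fun s => Prod.ext rfl (Subtype.ext (mul_zero s.1)))
    show m.ζ a * ΛF.val (Path.seg a 0) * 1 = m.ζ a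
    rw [hseg, ΛF.refl_eq, mul_one, mul_one]
  -- G ∘ ι₁ = -m
  have h1 : A.iota 1 ≫ G = ZtHom.neg m := by
    refine ZtHom.ext (ContinuousMap.ext fun a => hF1 a) (funext fun a => ?_)
    show ζF (a, 1) * 1 = -(m.ζ a)
    have hseg : Path.seg a (1:I) = Path.vert a :=
      Path.ext (funext fun s => Prod.ext rfl (Subtype.ext (mul_one s.1)))
    show m.ζ a * ΛF.val (Path.seg a 1) * 1 = -(m.ζ a)
    rw [hseg, hvert a, mul_one]
    simp
  -- ι_t ∘ proj = id, hence Ω(ι₀) = Ω(ι₁)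
  have hitp : ∀ t : I, A.iota t ≫ A.proj = 𝟙 A := fun t =>
    ZtHom.ext (ContinuousMap.ext fun a => rfl) (funext fun a => one_mul 1)
  have hiota : Ω.map (A.iota 1) = Ω.map (A.iota 0) := by
    calc Ω.map (A.iota 1)
        = Ω.map (A.iota 1) ≫ (Ω.map A.proj ≫ Ω.map (A.iota 0)) := by
          rw [hΩ A, Category.comp_id]
      _ = (Ω.map (A.iota 1) ≫ Ω.map A.proj) ≫ Ω.map (A.iota 0) := by
          rw [Category.assoc]
      _ = Ω.map (A.iota 1 ≫ A.proj) ≫ Ω.map (A.iota 0) := by rw [Ω.map_comp]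
      _ = Ω.map (A.iota 0) := by rw [hitp 1, Ω.map_id, Category.id_comp]
  have hmain : Ω.map m = -Ω.map m := by
    have e0 : Ω.map m = Ω.map (A.iota 0) ≫ Ω.map G := by rw [← Ω.map_comp, h0]
    have e1 : Ω.map (ZtHom.neg m) = Ω.map (A.iota 1) ≫ Ω.map G := by
      rw [← Ω.map_comp, h1]
    have : Ω.map m = Ω.map (ZtHom.neg m) := by rw [e0, e1, hiota]
    rwa [hinv A B m] at this
  refine ⟨hmain, ?_⟩
  rw [two_zsmul]
  nth_rewrite 1 [hmain]
  exact neg_add_cancel _
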